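/- The ℂ-linear map from V = ℂ⁵ to the space of quadratic forms on ⋀²V sending v to q_v (where q_v(α) = φ(α ∧ α ∧ v)) is injective, and its image is exactly the set of quadratic forms Q on ⋀²V satisfying Q(a ∧ b) = 0 for all a, b ∈ V, i.e. the quadratic forms vanishing on the cone of decomposable 2-vectors (the affine cone over the Plücker-embedded Grassmannian Gr(2,5)). -/

import Mathlib

open ExteriorAlgebra

/-- `V = ℂ⁵`. -/
abbrev V : Type := Fin 5 → ℂ

/-- The exterior algebra of `V`; its degree-`k` part `⋀[ℂ]^k V` is the `k`-th exterior power. -/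
abbrev E : Type := ExteriorAlgebra ℂ V

/-- The decomposable 2-vector `a ∧ b` as an element of `⋀²V`. -/
noncomputable def decomp (a b : V) : ⋀[ℂ]^2 V :=
  ⟨ι ℂ a * ι ℂ b, by
    rw [exteriorPower, pow_two]
    exact Submodule.mul_mem_mul (LinearMap.mem_range_self _ a) (LinearMap.mem_range_self _ b)⟩

/-- The symmetric bilinear form `B_v(α, β) = φ(α ∧ β ∧ v)` on `⋀²V`. -/
noncomputable def Bv (φ : E →ₗ[ℂ] ℂ) (v : V) : (⋀[ℂ]^2 V) →ₗ[ℂ] (⋀[ℂ]^2 V) →ₗ[ℂ] ℂ :=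
  LinearMap.compr₂
    (LinearMap.compl₁₂ (LinearMap.mul ℂ E) (⋀[ℂ]^2 V).subtype (⋀[ℂ]^2 V).subtype)
    (φ ∘ₗ LinearMap.mulRight ℂ (ι ℂ v))

/-- The quadratic form `q_v(α) = φ(α ∧ α ∧ v)` on `⋀²V`. -/
noncomputable def qv (φ : E →ₗ[ℂ] ℂ) (v : V) : QuadraticForm ℂ (⋀[ℂ]^2 V) :=
  LinearMap.BilinMap.toQuadraticMap (Bv φ v)

-- basic decomp lemmas
lemma decomp_val (a b : V) : (decomp a b : E) = ι ℂ a * ι ℂ b := rfl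

lemma swapι (a b : V) : ι ℂ a * ι ℂ b = -(ι ℂ b * ι ℂ a) := by
  have h := ι_add_mul_swap (R := ℂ) a b
  rw [eq_neg_iff_add_eq_zero, h]

lemma decomp_self (a : V) : decomp a a = 0 := by
  apply Subtype.ext; simp [decomp_val, ι_sq_zero]

lemma decomp_swap (a b : V) : decomp b a = -decomp a b := by
  apply Subtype.ext; simpa [decomp_val] using swapι b a

lemma decomp_add_left (a a' b : V) : decomp (a + a') b = decomp a b + decomp a' b := by
  apply Subtype.ext; simp [decomp_val, map_add, add_mul]

lemma decomp_add_right (a b b' : V) : decomp a (b + b') = decomp a b + decomp a b' := by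
  apply Subtype.ext; simp [decomp_val, map_add, mul_add]

lemma decomp_smul_left (c : ℂ) (a b : V) : decomp (c • a) b = c • decomp a b := by
  apply Subtype.ext; simp [decomp_val, map_smul, smul_mul_assoc]

lemma decomp_smul_right (c : ℂ) (a b : V) : decomp a (c • b) = c • decomp a b := by
  apply Subtype.ext; simp [decomp_val, map_smul, mul_smul_comm]

-- swap a degree-2 product past a single ι
lemma swap2 (a b v : V) : (ι ℂ a * ι ℂ b) * ι ℂ v = ι ℂ v * (ι ℂ a * ι ℂ b) := by
  have h1 := swapι b v
  have h2 := swapι a v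
  calc ι ℂ a * ι ℂ b * ι ℂ v = ι ℂ a * (ι ℂ b * ι ℂ v) := by noncomm_ring
    _ = -(ι ℂ a * ι ℂ v) * ι ℂ b := by rw [h1]; simp [mul_neg, neg_mul, mul_assoc]
    _ = ι ℂ v * ι ℂ a * ι ℂ b := by rw [h2]; simp [mul_neg, neg_mul, mul_assoc]
    _ = ι ℂ v * (ι ℂ a * ι ℂ b) := by noncomm_ring

lemma iM2 (m : Fin 2 → V) : ιMulti ℂ 2 m = ι ℂ (m 0) * ι ℂ (m 1) := by
  simp [ιMulti_apply, List.ofFn_succ, Matrix.vecTail, Function.comp]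

lemma iM5 (m : Fin 5 → V) :
    ιMulti ℂ 5 m = ι ℂ (m 0) * (ι ℂ (m 1) * (ι ℂ (m 2) * (ι ℂ (m 3) * ι ℂ (m 4)))) := by
  norm_num [ιMulti_apply, List.ofFn_succ, Matrix.vecTail, Function.comp, mul_assoc,
    show (Fin.succ 2 : Fin 5) = 3 from rfl, show ((2 : Fin 3).succ.succ : Fin 5) = 4 from rfl]

lemma mem_span_decomp (x : ⋀[ℂ]^2 V) :
    x ∈ Submodule.span ℂ (Set.range fun p : V × V => decomp p.1 p.2) := by
  have hx : (x : E) ∈ Submodule.span ℂ (Set.range (ιMulti ℂ 2 (M := V))) := by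
    rw [ιMulti_span_fixedDegree]; exact x.2
  have h1 : Submodule.span ℂ (Set.range (ιMulti ℂ 2 (M := V))) ≤
      Submodule.map (⋀[ℂ]^2 V).subtype
        (Submodule.span ℂ (Set.range fun p : V × V => decomp p.1 p.2)) := by
    rw [Submodule.span_le]
    rintro _ ⟨m, rfl⟩
    refine ⟨decomp (m 0) (m 1), Submodule.subset_span ⟨(m 0, m 1), rfl⟩, ?_⟩
    simp [decomp_val, iM2, Matrix.vecTail, Function.comp]
  obtain ⟨y, hy, hyx⟩ := h1 hx
  rwa [show y = x from Subtype.ext hyx] at hy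

lemma linear_ext {W : Type*} [AddCommGroup W] [Module ℂ W] {f g : (⋀[ℂ]^2 V) →ₗ[ℂ] W}
    (h : ∀ a b : V, f (decomp a b) = g (decomp a b)) : f = g := by
  refine LinearMap.ext fun x => ?_
  have hx := mem_span_decomp x
  induction hx using Submodule.span_induction with
  | mem z hz => obtain ⟨p, rfl⟩ := hz; exact h p.1 p.2
  | zero => simp
  | add x y _ _ hx hy => simp [map_add, hx, hy]
  | smul c x _ hx => simp [map_smul, hx]

noncomputable def Psi (φ : E →ₗ[ℂ] ℂ) : V →ₗ[ℂ] (V [⋀^Fin 4]→ₗ[ℂ] ℂ) :=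
  (φ.compAlternatingMap (ιMulti ℂ 5)).curryLeft

lemma Psi_apply (φ : E →ₗ[ℂ] ℂ) (v : V) (m : Fin 4 → V) :
    Psi φ v m = φ (ιMulti ℂ 5 (Fin.cons v m)) := rfl

noncomputable def eb : Fin 5 → V := ⇑(Pi.basisFun ℂ (Fin 5))

noncomputable def omg : E := ιMulti ℂ 5 eb

lemma omg_mem : omg ∈ ⋀[ℂ]^5 V := ιMulti_range ℂ 5 ⟨eb, rfl⟩

lemma iM5_comp_mem_span (r : Fin 5 → Fin 5) :
    ιMulti ℂ 5 (fun i => eb (r i)) ∈ Submodule.span ℂ {omg} := by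
  by_cases hr : Function.Injective r
  · have hb : Function.Bijective r := Finite.injective_iff_bijective.1 hr
    have hfun : (fun i => eb (r i)) = eb ∘ ⇑(Equiv.ofBijective r hb) := rfl
    rw [hfun, AlternatingMap.map_perm]
    rw [Units.smul_def]
    exact zsmul_mem (Submodule.mem_span_singleton_self omg) _
  · obtain ⟨i, j, hij, hne⟩ := Function.not_injective_iff.1 hr
    rw [AlternatingMap.map_eq_zero_of_eq (ιMulti ℂ 5) (fun i => eb (r i)) (show eb (r i) = eb (r j) from congrArg eb hij) hne]
    exact Submodule.zero_mem _

lemma eq_sum_basis (v : V) : v = ∑ k, v k • eb k := by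
  funext j
  rw [Finset.sum_apply]
  simp [eb, Pi.basisFun_apply, Pi.single_apply]

lemma phi_omg_ne (φ : E →ₗ[ℂ] ℂ)
    (hφ : Function.Bijective (φ ∘ₗ (⋀[ℂ]^5 V).subtype)) : φ omg ≠ 0 := by
  obtain ⟨x, hx1⟩ := hφ.surjective 1
  have hx : (x : E) ∈ Submodule.span ℂ (Set.range (ιMulti ℂ 5 (M := V))) := by
    rw [ιMulti_span_fixedDegree]; exact x.2
  have hx2 : (x : E) ∈ Submodule.span ℂ {omg} := by
    refine Submodule.span_le.2 ?_ hx
    rintro _ ⟨m, rfl⟩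
    have hm : ∀ i : Fin 5, m i = ∑ k, m i k • eb k := fun i => eq_sum_basis (m i)
    have : ιMulti ℂ 5 m =
        ∑ r : Fin 5 → Fin 5, (∏ i, m i (r i)) • ιMulti ℂ 5 (fun i => eb (r i)) := by
      conv_lhs => rw [show m = fun i => ∑ k, m i k • eb k from funext hm]
      rw [← AlternatingMap.coe_multilinearMap,
        MultilinearMap.map_sum (ιMulti ℂ 5 (M := V)).toMultilinearMap]
      exact Finset.sum_congr rfl fun r _ => by
        rw [MultilinearMap.map_smul_univ]
    rw [this]
    exact Submodule.sum_mem _ fun r _ =>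
      Submodule.smul_mem _ _ (iM5_comp_mem_span r)
  obtain ⟨c, hc⟩ := Submodule.mem_span_singleton.1 hx2
  intro h0
  have : φ (x : E) = 1 := hx1
  rw [← hc, map_smul, smul_eq_mul, h0, mul_zero] at this
  exact one_ne_zero this.symm

noncomputable def Dj (φ : E →ₗ[ℂ] ℂ) (j : Fin 5) : ℂ :=
  φ (ιMulti ℂ 5 (Fin.cons (eb j) fun i => eb (j.succAbove i)))

lemma cons_inj (j : Fin 5) :
    Function.Injective (Fin.cons j (Fin.succAbove j) : Fin 5 → Fin 5) := by
  intro x y h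
  obtain rfl | ⟨i, rfl⟩ := Fin.eq_zero_or_eq_succ x <;>
    obtain rfl | ⟨i', rfl⟩ := Fin.eq_zero_or_eq_succ y <;>
    simp only [Fin.cons_zero, Fin.cons_succ] at h
  · rfl
  · exact absurd h.symm (Fin.succAbove_ne j i')
  · exact absurd h (Fin.succAbove_ne j i)
  · exact congrArg Fin.succ (Fin.succAbove_right_injective h)

lemma Dj_ne (φ : E →ₗ[ℂ] ℂ)
    (hφ : Function.Bijective (φ ∘ₗ (⋀[ℂ]^5 V).subtype)) (j : Fin 5) : Dj φ j ≠ 0 := by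
  have hb := Finite.injective_iff_bijective.1 (cons_inj j)
  have hfun : (Fin.cons (eb j) fun i => eb (j.succAbove i)) =
      eb ∘ ⇑(Equiv.ofBijective _ hb) := by
    funext x
    refine Fin.cases rfl (fun i => rfl) x
  rw [Dj, hfun, AlternatingMap.map_perm, Units.smul_def, map_zsmul]
  rcases Int.units_eq_one_or (Equiv.Perm.sign (Equiv.ofBijective _ hb)) with h | h <;>
    rw [h]
  · rw [show ((1 : ℤˣ) : ℤ) = 1 from rfl, one_smul]; exact phi_omg_ne φ hφ
  · rw [show ((-1 : ℤˣ) : ℤ) = -1 from rfl, neg_smul, one_smul, neg_ne_zero]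
    exact phi_omg_ne φ hφ

lemma Psi_basis_ne (φ : E →ₗ[ℂ] ℂ) {k j : Fin 5} (hkj : k ≠ j) :
    Psi φ (eb k) (fun i => eb (j.succAbove i)) = 0 := by
  obtain ⟨i, hi⟩ := Fin.exists_succAbove_eq hkj
  have hcc : (Fin.cons (eb k) fun i => eb (j.succAbove i) : Fin 5 → V) i.succ
      = (Fin.cons (eb k) fun i => eb (j.succAbove i) : Fin 5 → V) 0 := by
    simp [Fin.cons_succ, Fin.cons_zero, hi]
  rw [Psi_apply, AlternatingMap.map_eq_zero_of_eq (ιMulti ℂ 5) _ hcc (Fin.succ_ne_zero i),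
    map_zero]

lemma alt_sum_apply {α : Type*} (s : Finset α) (f : α → (V [⋀^Fin 4]→ₗ[ℂ] ℂ))
    (m : Fin 4 → V) : (∑ k ∈ s, f k) m = ∑ k ∈ s, f k m := by
  induction s using Finset.cons_induction with
  | empty => rfl
  | cons a s ha ih => rw [Finset.sum_cons, Finset.sum_cons, AlternatingMap.add_apply, ih]

lemma Psi_eval (φ : E →ₗ[ℂ] ℂ) (v : V) (j : Fin 5) :
    Psi φ v (fun i => eb (j.succAbove i)) = v j * Dj φ j := by
  conv_lhs => rw [eq_sum_basis v, map_sum]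
  rw [alt_sum_apply, Finset.sum_eq_single j]
  · rw [map_smul, AlternatingMap.smul_apply]
    rfl
  · intro k _ hkj
    rw [map_smul, AlternatingMap.smul_apply, Psi_basis_ne φ hkj, smul_zero]
  · intro h; exact absurd (Finset.mem_univ j) h

lemma Psi_inj (φ : E →ₗ[ℂ] ℂ)
    (hφ : Function.Bijective (φ ∘ₗ (⋀[ℂ]^5 V).subtype)) {w : V}
    (hw : Psi φ w = 0) : w = 0 := by
  funext j
  have h := congrArg (fun f => f (fun i => eb (j.succAbove i))) hw
  simp only [Psi_eval φ w j, map_zero, AlternatingMap.zero_apply] at h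
  exact (mul_eq_zero.1 h).resolve_right (Dj_ne φ hφ j)

lemma Bv_apply (φ : E →ₗ[ℂ] ℂ) (v : V) (x y : ⋀[ℂ]^2 V) :
    Bv φ v x y = φ ((x : E) * (y : E) * ι ℂ v) := rfl

lemma comm22 (a b c d : V) :
    (ι ℂ a * ι ℂ b) * (ι ℂ c * ι ℂ d) = (ι ℂ c * ι ℂ d) * (ι ℂ a * ι ℂ b) := by
  calc (ι ℂ a * ι ℂ b) * (ι ℂ c * ι ℂ d) = ((ι ℂ a * ι ℂ b) * ι ℂ c) * ι ℂ d := by noncomm_ring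
    _ = (ι ℂ c * (ι ℂ a * ι ℂ b)) * ι ℂ d := by rw [swap2 a b c]
    _ = ι ℂ c * ((ι ℂ a * ι ℂ b) * ι ℂ d) := by noncomm_ring
    _ = ι ℂ c * (ι ℂ d * (ι ℂ a * ι ℂ b)) := by rw [swap2 a b d]
    _ = (ι ℂ c * ι ℂ d) * (ι ℂ a * ι ℂ b) := by noncomm_ring

lemma prod5_eq (a b c d v : V) :
    (ι ℂ a * ι ℂ b) * (ι ℂ c * ι ℂ d) * ι ℂ v = ιMulti ℂ 5 (Fin.cons v ![a, b, c, d]) := by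
  have h1 : ιMulti ℂ 5 (Fin.cons v ![a, b, c, d])
      = ι ℂ v * (ι ℂ a * (ι ℂ b * (ι ℂ c * ι ℂ d))) := by
    rw [iM5]
    rfl
  rw [h1]
  calc (ι ℂ a * ι ℂ b) * (ι ℂ c * ι ℂ d) * ι ℂ v
      = (ι ℂ a * ι ℂ b) * ((ι ℂ c * ι ℂ d) * ι ℂ v) := by noncomm_ring
    _ = (ι ℂ a * ι ℂ b) * (ι ℂ v * (ι ℂ c * ι ℂ d)) := by rw [swap2 c d v]
    _ = ((ι ℂ a * ι ℂ b) * ι ℂ v) * (ι ℂ c * ι ℂ d) := by noncomm_ring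
    _ = (ι ℂ v * (ι ℂ a * ι ℂ b)) * (ι ℂ c * ι ℂ d) := by rw [swap2 a b v]
    _ = ι ℂ v * (ι ℂ a * (ι ℂ b * (ι ℂ c * ι ℂ d))) := by noncomm_ring

lemma Bv_decomp (φ : E →ₗ[ℂ] ℂ) (v a b c d : V) :
    Bv φ v (decomp a b) (decomp c d) = Psi φ v ![a, b, c, d] := by
  rw [Bv_apply, decomp_val, decomp_val, prod5_eq, Psi_apply]

lemma qv_apply (φ : E →ₗ[ℂ] ℂ) (v : V) (x : ⋀[ℂ]^2 V) : qv φ v x = Bv φ v x x :=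
  LinearMap.BilinMap.toQuadraticMap_apply _ _

lemma qv_decomp (φ : E →ₗ[ℂ] ℂ) (v a b : V) : qv φ v (decomp a b) = 0 := by
  rw [qv_apply, Bv_apply, decomp_val]
  have h : (ι ℂ a * ι ℂ b) * (ι ℂ a * ι ℂ b) = 0 := by
    calc (ι ℂ a * ι ℂ b) * (ι ℂ a * ι ℂ b) = ((ι ℂ a * ι ℂ b) * ι ℂ a) * ι ℂ b := by noncomm_ring
      _ = (ι ℂ a * (ι ℂ a * ι ℂ b)) * ι ℂ b := by rw [swap2 a b a]
      _ = ((ι ℂ a * ι ℂ a) * ι ℂ b) * ι ℂ b := by noncomm_ring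
      _ = 0 := by rw [ι_sq_zero]; simp
  rw [h, zero_mul, map_zero]

lemma polar_qv (φ : E →ₗ[ℂ] ℂ) (v : V) (x y : ⋀[ℂ]^2 V) :
    QuadraticMap.polarBilin (qv φ v) x y = Bv φ v x y + Bv φ v y x := by
  rw [QuadraticMap.polarBilin_apply_apply, qv]
  exact LinearMap.BilinMap.polar_toQuadraticMap _ _

lemma polar_qv_decomp (φ : E →ₗ[ℂ] ℂ) (v a b c d : V) :
    QuadraticMap.polarBilin (qv φ v) (decomp a b) (decomp c d)
      = 2 * Psi φ v ![a, b, c, d] := by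
  rw [polar_qv, Bv_decomp]
  have : Bv φ v (decomp c d) (decomp a b) = Psi φ v ![a, b, c, d] := by
    rw [Bv_apply, decomp_val, decomp_val, comm22 c d a b, prod5_eq, Psi_apply]
  rw [this]; ring

section TTsec
variable (P : (⋀[ℂ]^2 V) →ₗ[ℂ] (⋀[ℂ]^2 V) →ₗ[ℂ] ℂ)
variable (h13 : ∀ a b d : V, P (decomp a b) (decomp a d) = 0)

lemma TTa (a c d : V) : P (decomp a a) (decomp c d) = 0 := by
  rw [decomp_self]; simp

lemma TTb (a b c : V) : P (decomp a b) (decomp c c) = 0 := by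
  rw [decomp_self]; simp

include h13

lemma TTc (a b c : V) : P (decomp a b) (decomp c b) = 0 := by
  rw [show decomp a b = -decomp b a from decomp_swap b a,
    show decomp c b = -decomp b c from decomp_swap b c]
  simp [h13 b a c]

lemma TTd (a b c : V) : P (decomp a b) (decomp c a) = 0 := by
  rw [show decomp c a = -decomp a c from decomp_swap a c]
  simp [h13 a b c]

lemma TTe (a b d : V) : P (decomp a b) (decomp b d) = 0 := by
  rw [show decomp a b = -decomp b a from decomp_swap b a]
  simp [h13 b a d]

omit h13 in
lemma caseA (m : Fin 4 → V) (hm : m 0 = m 1) :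
    P (decomp (m 0) (m 1)) (decomp (m 2) (m 3)) = 0 := by rw [hm]; exact TTa P _ _ _
omit h13 in
lemma caseB (m : Fin 4 → V) (hm : m 2 = m 3) :
    P (decomp (m 0) (m 1)) (decomp (m 2) (m 3)) = 0 := by rw [hm]; exact TTb P _ _ _
lemma caseC (m : Fin 4 → V) (hm : m 0 = m 2) :
    P (decomp (m 0) (m 1)) (decomp (m 2) (m 3)) = 0 := by rw [hm]; exact h13 _ _ _
lemma caseD (m : Fin 4 → V) (hm : m 0 = m 3) :
    P (decomp (m 0) (m 1)) (decomp (m 2) (m 3)) = 0 := by rw [hm]; exact TTd P h13 _ _ _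
lemma caseE (m : Fin 4 → V) (hm : m 1 = m 2) :
    P (decomp (m 0) (m 1)) (decomp (m 2) (m 3)) = 0 := by rw [hm]; exact TTe P h13 _ _ _
lemma caseF (m : Fin 4 → V) (hm : m 1 = m 3) :
    P (decomp (m 0) (m 1)) (decomp (m 2) (m 3)) = 0 := by rw [hm]; exact TTc P h13 _ _ _

noncomputable def TT : V [⋀^Fin 4]→ₗ[ℂ] ℂ where
  toFun m := P (decomp (m 0) (m 1)) (decomp (m 2) (m 3))
  map_update_add' m i x y := by
    fin_cases i <;>
      simp [Function.update_apply, Fin.ext_iff, decomp_add_left, decomp_add_right,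
        map_add, LinearMap.add_apply,
        show ((0:Fin 4):ℕ) = 0 from rfl, show ((1:Fin 4):ℕ) = 1 from rfl,
        show ((2:Fin 4):ℕ) = 2 from rfl, show ((3:Fin 4):ℕ) = 3 from rfl]
  map_update_smul' m i c x := by
    fin_cases i <;>
      simp [Function.update_apply, Fin.ext_iff, decomp_smul_left, decomp_smul_right,
        map_smul, LinearMap.smul_apply,
        show ((0:Fin 4):ℕ) = 0 from rfl, show ((1:Fin 4):ℕ) = 1 from rfl,
        show ((2:Fin 4):ℕ) = 2 from rfl, show ((3:Fin 4):ℕ) = 3 from rfl]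
  map_eq_zero_of_eq' m i j hm hij := by
    fin_cases i <;> fin_cases j <;>
      first
      | exact absurd rfl hij
      | exact caseA P m hm | exact caseA P m hm.symm
      | exact caseB P m hm | exact caseB P m hm.symm
      | exact caseC P h13 m hm | exact caseC P h13 m hm.symm
      | exact caseD P h13 m hm | exact caseD P h13 m hm.symm
      | exact caseE P h13 m hm | exact caseE P h13 m hm.symm
      | exact caseF P h13 m hm | exact caseF P h13 m hm.symm

lemma TT_apply (a b c d : V) :
    TT P h13 ![a, b, c, d] = P (decomp a b) (decomp c d) := rfl

end TTsec

set_option maxHeartbeats 4000000 in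
set_option maxRecDepth 10000 in
lemma factor : ∀ l : Fin 4 → Fin 5, Function.Injective l →
    ∃ (j : Fin 5) (σ : Equiv.Perm (Fin 4)), l = Fin.succAbove j ∘ ⇑σ := by decide

lemma alt_ext {f g : V [⋀^Fin 4]→ₗ[ℂ] ℂ}
    (h : ∀ j : Fin 5, f (fun i => eb (j.succAbove i)) = g (fun i => eb (j.succAbove i))) :
    f = g := by
  apply Module.Basis.ext_alternating (Pi.basisFun ℂ (Fin 5))
  intro l hl
  obtain ⟨j, σ, rfl⟩ := factor l hl
  have h1 : (fun i => (Pi.basisFun ℂ (Fin 5)) ((Fin.succAbove j ∘ ⇑σ) i))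
      = (fun i => eb (j.succAbove i)) ∘ ⇑σ := rfl
  rw [h1, AlternatingMap.map_perm, AlternatingMap.map_perm, h j]

lemma coord (c : Fin 5 → ℂ) (j : Fin 5) : (∑ k, c k • eb k) j = c j := by
  rw [Finset.sum_apply]
  simp [eb, Pi.basisFun_apply, Pi.single_apply]


/-- Fix a linear functional `φ` on the exterior algebra restricting to an
isomorphism `⋀⁵V ≅ ℂ`.  The linear map `v ↦ q_v`, `q_v(α) = φ(α ∧ α ∧ v)`, from `V` to
quadratic forms on `⋀²V` is injective, and its image is exactly the set of quadratic forms
vanishing on all decomposable 2-vectors `a ∧ b` (the affine cone over the Plücker-embedded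
Grassmannian `Gr(2,5)`). -/
theorem qv_injective_and_range_eq_vanishing_on_grassmannian
    (φ : E →ₗ[ℂ] ℂ)
    (hφ : Function.Bijective (φ ∘ₗ (⋀[ℂ]^5 V).subtype)) :
    Function.Injective (qv φ) ∧
    Set.range (qv φ) =
      {Q : QuadraticForm ℂ (⋀[ℂ]^2 V) | ∀ a b : V, Q (decomp a b) = 0} := by
  have h2ne : (2 : ℂ) ≠ 0 := two_ne_zero
  constructor
  · intro v v' hvv
    have hψ : Psi φ v = Psi φ v' := by
      apply AlternatingMap.ext
      intro m
      have hm : m = ![m 0, m 1, m 2, m 3] := by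
        funext i; fin_cases i <;> rfl
      have h1 : QuadraticMap.polarBilin (qv φ v) (decomp (m 0) (m 1)) (decomp (m 2) (m 3))
          = QuadraticMap.polarBilin (qv φ v') (decomp (m 0) (m 1)) (decomp (m 2) (m 3)) := by
        rw [hvv]
      rw [polar_qv_decomp, polar_qv_decomp] at h1
      have h2 := mul_left_cancel₀ h2ne h1
      rw [hm]; exact h2
    have h0 : Psi φ (v - v') = 0 := by rw [map_sub, hψ, sub_self]
    exact sub_eq_zero.1 (Psi_inj φ hφ h0)
  · ext Q
    simp only [Set.mem_range, Set.mem_setOf_eq]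
    constructor
    · rintro ⟨v, rfl⟩ a b
      exact qv_decomp φ v a b
    · intro hQ
      have h13 : ∀ a b d : V, QuadraticMap.polarBilin Q (decomp a b) (decomp a d) = 0 := by
        intro a b d
        rw [QuadraticMap.polarBilin_apply_apply, QuadraticMap.polar,
          ← decomp_add_right, hQ, hQ, hQ]
        ring
      set T := TT (QuadraticMap.polarBilin Q) h13 with hT
      set c : Fin 5 → ℂ := fun j => T (fun i => eb (j.succAbove i)) / (2 * Dj φ j) with hc
      refine ⟨∑ k, c k • eb k, ?_⟩
      have hTeq : T = (2 : ℂ) • Psi φ (∑ k, c k • eb k) := by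
        apply alt_ext
        intro j
        have hcj : c j = T (fun i => eb (j.succAbove i)) / (2 * Dj φ j) := rfl
        rw [AlternatingMap.smul_apply, Psi_eval, coord, hcj, smul_eq_mul]
        field_simp [Dj_ne φ hφ j]
      apply QuadraticMap.polarBilin_injective (isUnit_iff_ne_zero.2 h2ne)
      apply linear_ext
      intro a b
      apply linear_ext
      intro c' d'
      rw [polar_qv_decomp]
      have hQT : QuadraticMap.polarBilin Q (decomp a b) (decomp c' d')
          = T ![a, b, c', d'] := (TT_apply _ h13 a b c' d').symm
      rw [hQT, hTeq, AlternatingMap.smul_apply, smul_eq_mul]
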